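/- With the same setup as before (H(s) = C(sE-A)^{-1}B, points λ_i, μ_j, values w_i = H(λ_i), v_j = H(μ_j), generalized reachability matrix R and observability matrix O), the shifted Loewner matrix L_σ with entries (L_σ)_{ji} = (μ_j v_j - λ_i w_i)/(μ_j - λ_i) satisfies L_σ = -O A R. -/

import Mathlib

open Matrix

/-- Shifted Loewner matrix factorization: `Lσ = -O * A * R`. -/
theorem shifted_loewner_factorization (n ρ ν : ℕ)
    (E A : Matrix (Fin n) (Fin n) ℂ)
    (B : Matrix (Fin n) (Fin 1) ℂ) (C : Matrix (Fin 1) (Fin n) ℂ)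
    (lam : Fin ρ → ℂ) (mu : Fin ν → ℂ)
    (hlam : Function.Injective lam) (hmu : Function.Injective mu)
    (hne : ∀ j i, mu j ≠ lam i)
    (hlamU : ∀ i, IsUnit (lam i • E - A)) (hmuU : ∀ j, IsUnit (mu j • E - A))
    (w : Fin ρ → ℂ) (v : Fin ν → ℂ)
    (hw : ∀ i, w i = (C * (lam i • E - A)⁻¹ * B) 0 0)
    (hv : ∀ j, v j = (C * (mu j • E - A)⁻¹ * B) 0 0)
    (R : Matrix (Fin n) (Fin ρ) ℂ) (O : Matrix (Fin ν) (Fin n) ℂ)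
    (hR : ∀ k i, R k i = ((lam i • E - A)⁻¹ * B) k 0)
    (hO : ∀ j k, O j k = (C * (mu j • E - A)⁻¹) 0 k)
    (Ls : Matrix (Fin ν) (Fin ρ) ℂ)
    (hLs : ∀ j i, Ls j i = (mu j * v j - lam i * w i) / (mu j - lam i)) :
    Ls = -(O * A * R) := by
  ext j i
  have hd : mu j - lam i ≠ 0 := sub_ne_zero.mpr (hne j i)
  set Pj := (mu j • E - A)⁻¹ with hPj
  set Qi := (lam i • E - A)⁻¹ with hQi
  have h1 : Pj * (mu j • E - A) = 1 :=
    Matrix.nonsing_inv_mul _ ((Matrix.isUnit_iff_isUnit_det _).mp (hmuU j))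
  have h2 : (lam i • E - A) * Qi = 1 :=
    Matrix.mul_nonsing_inv _ ((Matrix.isUnit_iff_isUnit_det _).mp (hlamU i))
  have hA : (mu j - lam i) • A = lam i • (mu j • E - A) - mu j • (lam i • E - A) := by
    module
  have key : (mu j - lam i) • (C * Pj * A * (Qi * B)) =
      lam i • (C * (Qi * B)) - mu j • (C * Pj * B) := by
    calc (mu j - lam i) • (C * Pj * A * (Qi * B))
        = C * Pj * ((mu j - lam i) • A) * (Qi * B) := by
          rw [Matrix.mul_smul, Matrix.smul_mul]
      _ = C * Pj * (lam i • (mu j • E - A) - mu j • (lam i • E - A)) * (Qi * B) := by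
          rw [hA]
      _ = lam i • (C * (Pj * (mu j • E - A)) * (Qi * B))
          - mu j • (C * Pj * ((lam i • E - A) * Qi) * B) := by
          simp only [Matrix.mul_sub, Matrix.sub_mul, Matrix.mul_smul, Matrix.smul_mul,
            Matrix.mul_assoc]
      _ = lam i • (C * (Qi * B)) - mu j • (C * Pj * B) := by
          rw [h1, h2, Matrix.mul_one, Matrix.mul_one]
  have hentry : (O * A * R) j i = (C * Pj * A * (Qi * B)) 0 0 := by
    simp only [Matrix.mul_apply, hO, hR, Finset.mul_sum, Finset.sum_mul]
    rfl
  have hkey00 : (mu j - lam i) * ((C * Pj * A * (Qi * B)) 0 0)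
      = lam i * ((C * (Qi * B)) 0 0) - mu j * ((C * Pj * B) 0 0) := by
    have := congrFun (congrFun key 0) 0
    simpa using this
  have hwi : (C * (Qi * B)) 0 0 = w i := by rw [hw i, ← Matrix.mul_assoc, hQi]
  have hvj : (C * Pj * B) 0 0 = v j := by rw [hv j, hPj]
  rw [hwi, hvj] at hkey00
  rw [hLs, Matrix.neg_apply, hentry]
  field_simp
  linear_combination hkey00
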